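/- For integers τ₁ ≥ τ₂ ≥ 0 not both zero, δ > 0, and s > 0, the coefficient ∫_{-1}^{1}∫_{-1}^{1} (1-xy+δ)^{-s} P(x,y) dx dy is nonnegative, where P(x,y) = (1/2)(L_{τ₁+τ₂}(x) L_{τ₁-τ₂}(y) + L_{τ₁+τ₂}(y) L_{τ₁-τ₂}(x)) and L_n denotes the degree-n Legendre polynomial. -/

import Mathlib

open MeasureTheory


/-- The Legendre polynomial `L_n`, via Bonnet's recurrence, as a function on `ℝ`. -/
noncomputable def legendreP : ℕ → ℝ → ℝ
  | 0 => fun _ => 1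
  | 1 => fun x => x
  | (n+2) => fun x =>
      ((2*(n:ℝ)+3) * x * legendreP (n+1) x - ((n:ℝ)+1) * legendreP n x) / ((n:ℝ)+2)

/-- The Gegenbauer polynomial `C_n^{3/2}`, via its recurrence, as a function on `ℝ`. -/
noncomputable def gegenbauerC : ℕ → ℝ → ℝ
  | 0 => fun _ => 1
  | 1 => fun x => 3*x
  | (n+2) => fun x =>
      ((2*(n:ℝ)+5) * x * gegenbauerC (n+1) x - ((n:ℝ)+3) * gegenbauerC n x) / ((n:ℝ)+2)

/-- The generalized Jacobi polynomial `P_τ` on `Gr(2,4)` in the variables `ξ₊, ξ₋`. -/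
noncomputable def Pjac (τ₁ τ₂ : ℕ) (x y : ℝ) : ℝ :=
  (legendreP (τ₁+τ₂) x * legendreP (τ₁-τ₂) y
    + legendreP (τ₁+τ₂) y * legendreP (τ₁-τ₂) x) / 2


open Real


noncomputable def legD : ℕ → ℝ → ℝ
  | 0 => fun _ => 0
  | 1 => fun _ => 1
  | (n+2) => fun x =>
      ((2*(n:ℝ)+3) * (legendreP (n+1) x + x * legD (n+1) x) - ((n:ℝ)+1) * legD n x) / ((n:ℝ)+2)


lemma legendreP_cont : ∀ n, Continuous (legendreP n) := by
  have : ∀ n, Continuous (legendreP n) ∧ Continuous (legendreP (n+1)) := by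
    intro n
    induction n with
    | zero => constructor <;> simp [legendreP] <;> fun_prop
    | succ n ih =>
      refine ⟨ih.2, ?_⟩
      show Continuous (legendreP (n+2))
      simp only [legendreP]
      exact (((continuous_const.mul continuous_id).mul ih.2).sub (continuous_const.mul ih.1)).div_const _
  exact fun n => (this n).1

lemma legD_cont : ∀ n, Continuous (legD n) := by
  have : ∀ n, Continuous (legD n) ∧ Continuous (legD (n+1)) := by
    intro n
    induction n with
    | zero => constructor <;> simp [legD] <;> fun_prop
    | succ n ih =>
      refine ⟨ih.2, ?_⟩
      show Continuous (legD (n+2))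
      simp only [legD]
      exact ((continuous_const.mul ((legendreP_cont (n+1)).add (continuous_id.mul ih.2))).sub
        (continuous_const.mul ih.1)).div_const _
  exact fun n => (this n).1

lemma legendreP_hasDerivAt : ∀ n (x : ℝ), HasDerivAt (legendreP n) (legD n x) x := by
  have : ∀ n (x : ℝ), HasDerivAt (legendreP n) (legD n x) x ∧
      HasDerivAt (legendreP (n+1)) (legD (n+1) x) x := by
    intro n
    induction n with
    | zero =>
      intro x
      constructor
      · simpa [legendreP, legD] using (hasDerivAt_const x (1:ℝ))
      · simpa [legendreP, legD] using (hasDerivAt_id' x)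
    | succ n ih =>
      intro x
      refine ⟨(ih x).2, ?_⟩
      show HasDerivAt (legendreP (n+2)) (legD (n+2) x) x
      have h1 : HasDerivAt (fun x : ℝ => (2*(n:ℝ)+3) * x * legendreP (n+1) x)
          ((2*(n:ℝ)+3) * legendreP (n+1) x + (2*(n:ℝ)+3) * x * legD (n+1) x) x := by
        have := ((hasDerivAt_id' x).const_mul (2*(n:ℝ)+3)).mul (ih x).2
        exact this.congr_deriv (by ring)
      have h2 := (ih x).1.const_mul ((n:ℝ)+1)
      have h3 := (h1.sub h2).div_const ((n:ℝ)+2)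
      have : legendreP (n+2) = fun x : ℝ =>
          ((2*(n:ℝ)+3) * x * legendreP (n+1) x - ((n:ℝ)+1) * legendreP n x) / ((n:ℝ)+2) := rfl
      rw [this]
      refine h3.congr_deriv ?_
      simp only [legD]
      ring
  exact fun n x => (this n x).1


lemma legEF : ∀ (n : ℕ) (x : ℝ),
    x * legD (n+1) x - legD n x = ((n:ℝ)+1) * legendreP (n+1) x ∧
    legD (n+1) x - x * legD n x = ((n:ℝ)+1) * legendreP n x := by
  intro n
  induction n with
  | zero => intro x; constructor <;> simp [legD, legendreP]
  | succ n ih =>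
    intro x
    obtain ⟨hE, hF⟩ := ih x
    have hne : ((n:ℝ)+2) ≠ 0 := by positivity
    have hD1 : ((n:ℝ)+2) * legD (n+2) x
        = (2*(n:ℝ)+3) * (legendreP (n+1) x + x * legD (n+1) x) - ((n:ℝ)+1) * legD n x := by
      show ((n:ℝ)+2) * (((2*(n:ℝ)+3) * (legendreP (n+1) x + x * legD (n+1) x)
        - ((n:ℝ)+1) * legD n x) / ((n:ℝ)+2)) = _
      field_simp
    have hD2 : ((n:ℝ)+2) * legendreP (n+2) x
        = (2*(n:ℝ)+3) * x * legendreP (n+1) x - ((n:ℝ)+1) * legendreP n x := by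
      show ((n:ℝ)+2) * (((2*(n:ℝ)+3) * x * legendreP (n+1) x
        - ((n:ℝ)+1) * legendreP n x) / ((n:ℝ)+2)) = _
      field_simp
    constructor
    · -- E (n+1)
      have h : ((n:ℝ)+2) * (x * legD (n+2) x - legD (n+1) x)
          = ((n:ℝ)+2) * ((((n:ℕ):ℝ)+1+1) * legendreP (n+2) x) := by
        push_cast
        linear_combination x * hD1 - ((n:ℝ)+2) * hD2 + ((n:ℝ)+1) * hF
          + (2*(n:ℝ)+3) * (x * hE - hF)
      have h2 := mul_left_cancel₀ hne h
      push_cast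
      push_cast at h2
      linarith
    · -- F (n+1)
      have h : ((n:ℝ)+2) * (legD (n+2) x - x * legD (n+1) x)
          = ((n:ℝ)+2) * ((((n:ℕ):ℝ)+1+1) * legendreP (n+1) x) := by
        linear_combination hD1 + ((n:ℝ)+1) * hE
      have h2 := mul_left_cancel₀ hne h
      push_cast
      push_cast at h2
      linarith

lemma legD_sub (n : ℕ) (x : ℝ) :
    legD (n+2) x - legD n x = (2*(n:ℝ)+3) * legendreP (n+1) x := by
  have h1 := (legEF n x).1
  have h2 := (legEF (n+1) x).2
  push_cast at h2
  linarith

lemma legendreP_one : ∀ n, legendreP n 1 = 1 := by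
  have : ∀ n, legendreP n 1 = 1 ∧ legendreP (n+1) 1 = 1 := by
    intro n
    induction n with
    | zero => constructor <;> simp [legendreP]
    | succ n ih =>
      refine ⟨ih.2, ?_⟩
      show legendreP (n+2) 1 = 1
      have h : legendreP (n+2) 1 = ((2*(n:ℝ)+3) * 1 * legendreP (n+1) 1
        - ((n:ℝ)+1) * legendreP n 1) / ((n:ℝ)+2) := rfl
      rw [h, ih.1, ih.2]
      have hne : ((n:ℝ)+2) ≠ 0 := by positivity
      field_simp
      ring
  exact fun n => (this n).1

lemma legendreP_negone : ∀ n, legendreP n (-1) = (-1:ℝ)^n := by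
  have : ∀ n, legendreP n (-1) = (-1:ℝ)^n ∧ legendreP (n+1) (-1) = (-1:ℝ)^(n+1) := by
    intro n
    induction n with
    | zero => constructor <;> simp [legendreP]
    | succ n ih =>
      refine ⟨ih.2, ?_⟩
      show legendreP (n+2) (-1) = (-1:ℝ)^(n+2)
      have h : legendreP (n+2) (-1) = ((2*(n:ℝ)+3) * (-1) * legendreP (n+1) (-1)
        - ((n:ℝ)+1) * legendreP n (-1)) / ((n:ℝ)+2) := rfl
      rw [h, ih.1, ih.2]
      have hne : ((n:ℝ)+2) ≠ 0 := by positivity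
      field_simp
      ring
  exact fun n => (this n).1



lemma integral_legendreP_succ (n : ℕ) :
    ∫ x in (-1:ℝ)..1, legendreP (n+1) x = 0 := by
  have hderiv : ∀ x ∈ Set.uIcc (-1:ℝ) 1,
      HasDerivAt (fun x => legendreP (n+2) x - legendreP n x)
        (legD (n+2) x - legD n x) x := fun x _ =>
    (legendreP_hasDerivAt (n+2) x).sub (legendreP_hasDerivAt n x)
  have hint : IntervalIntegrable (fun x => legD (n+2) x - legD n x) volume (-1) 1 :=
    ((legD_cont (n+2)).sub (legD_cont n)).intervalIntegrable _ _
  have h := intervalIntegral.integral_eq_sub_of_hasDerivAt hderiv hint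
  have hval : (legendreP (n+2) 1 - legendreP n 1) - (legendreP (n+2) (-1) - legendreP n (-1))
      = 0 := by
    rw [legendreP_one, legendreP_one, legendreP_negone, legendreP_negone]
    ring_nf
  rw [hval] at h
  have h2 : ∫ x in (-1:ℝ)..1, (2*(n:ℝ)+3) * legendreP (n+1) x = 0 := by
    rw [← h]
    apply intervalIntegral.integral_congr
    intro x _
    exact (legD_sub n x).symm
  rw [intervalIntegral.integral_const_mul] at h2
  have hne : (2*(n:ℝ)+3) ≠ 0 := by positivity
  exact (mul_eq_zero.mp h2).resolve_left hne

/-- moments -/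
noncomputable def legM (k n : ℕ) : ℝ := ∫ x in (-1:ℝ)..1, x^k * legendreP n x

lemma legM_zero_nonneg (n : ℕ) : 0 ≤ legM 0 n := by
  cases n with
  | zero => simp [legM, legendreP]
  | succ n =>
    have : legM 0 (n+1) = ∫ x in (-1:ℝ)..1, legendreP (n+1) x := by
      apply intervalIntegral.integral_congr; intro x _; simp
    rw [this, integral_legendreP_succ]

lemma x_mul_legendreP (n : ℕ) (x : ℝ) :
    x * legendreP (n+1) x = (((n:ℝ)+2)/(2*(n:ℝ)+3)) * legendreP (n+2) x
      + (((n:ℝ)+1)/(2*(n:ℝ)+3)) * legendreP n x := by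
  have h : legendreP (n+2) x = ((2*(n:ℝ)+3) * x * legendreP (n+1) x
    - ((n:ℝ)+1) * legendreP n x) / ((n:ℝ)+2) := rfl
  rw [h]
  have h1 : ((n:ℝ)+2) ≠ 0 := by positivity
  have h2 : (2*(n:ℝ)+3) ≠ 0 := by positivity
  field_simp
  ring

lemma legM_succ (k n : ℕ) : legM (k+1) (n+1)
    = (((n:ℝ)+2)/(2*(n:ℝ)+3)) * legM k (n+2) + (((n:ℝ)+1)/(2*(n:ℝ)+3)) * legM k n := by
  have hcongr : legM (k+1) (n+1) = ∫ x in (-1:ℝ)..1,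
      ((((n:ℝ)+2)/(2*(n:ℝ)+3)) * (x^k * legendreP (n+2) x)
        + (((n:ℝ)+1)/(2*(n:ℝ)+3)) * (x^k * legendreP n x)) := by
    apply intervalIntegral.integral_congr
    intro x _
    have := x_mul_legendreP n x
    calc x^(k+1) * legendreP (n+1) x = x^k * (x * legendreP (n+1) x) := by ring
    _ = _ := by rw [this]; ring
  rw [hcongr, intervalIntegral.integral_add, intervalIntegral.integral_const_mul,
    intervalIntegral.integral_const_mul]
  · rfl
  · exact (continuous_const.mul ((continuous_pow k).mul (legendreP_cont (n+2)))).intervalIntegrable _ _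
  · exact (continuous_const.mul ((continuous_pow k).mul (legendreP_cont n))).intervalIntegrable _ _

lemma legM_succ_zero (k : ℕ) : legM (k+1) 0 = legM k 1 := by
  apply intervalIntegral.integral_congr
  intro x _
  show x^(k+1) * legendreP 0 x = x^k * legendreP 1 x
  simp [legendreP]
  ring

lemma legM_nonneg : ∀ k n, 0 ≤ legM k n := by
  intro k
  induction k with
  | zero => exact legM_zero_nonneg
  | succ k ih =>
    intro n
    cases n with
    | zero => rw [legM_succ_zero]; exact ih 1
    | succ n =>
      rw [legM_succ]
      have h1 : (0:ℝ) ≤ ((n:ℝ)+2)/(2*(n:ℝ)+3) := by positivity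
      have h2 : (0:ℝ) ≤ ((n:ℝ)+1)/(2*(n:ℝ)+3) := by positivity
      have := ih (n+2); have := ih n
      positivity



noncomputable def coefC (δ s : ℝ) (k : ℕ) : ℝ :=
  Real.Gamma (s + k) / ((k.factorial : ℝ) * Real.Gamma s * (1+δ) ^ (s + (k:ℝ)))

lemma coefC_pos {δ s : ℝ} (hδ : 0 < δ) (hs : 0 < s) (k : ℕ) : 0 < coefC δ s k := by
  have h1 : (0:ℝ) < s + k := by positivity
  have h2 : (0:ℝ) < Real.Gamma (s + k) := Real.Gamma_pos_of_pos h1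
  have h3 : (0:ℝ) < Real.Gamma s := Real.Gamma_pos_of_pos hs
  have h4 : (0:ℝ) < (1+δ) ^ (s + (k:ℝ)) := by positivity
  have h5 : (0:ℝ) < (k.factorial : ℝ) := by positivity
  exact div_pos h2 (by positivity)

lemma coefC_succ {δ s : ℝ} (hδ : 0 < δ) (hs : 0 < s) (k : ℕ) :
    coefC δ s (k+1) = ((s + k) / (((k:ℝ)+1) * (1+δ))) * coefC δ s k := by
  have h1δ : (0:ℝ) < 1 + δ := by linarith
  have hsk : (0:ℝ) < s + k := by positivity
  have hG : Real.Gamma (s + (k:ℝ) + 1) = (s + k) * Real.Gamma (s + k) :=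
    Real.Gamma_add_one (ne_of_gt hsk)
  have hcast : s + ((k+1 : ℕ):ℝ) = s + (k:ℝ) + 1 := by push_cast; ring
  have hrpow : (1+δ) ^ (s + (k:ℝ) + 1) = (1+δ) ^ (s + (k:ℝ)) * (1+δ) :=
    Real.rpow_add_one (ne_of_gt h1δ) _
  have hfact : ((k+1).factorial : ℝ) = ((k:ℝ)+1) * (k.factorial : ℝ) := by
    rw [Nat.factorial_succ]; push_cast; ring
  rw [coefC, coefC, hcast, hG, hrpow, hfact]
  have h3 : (0:ℝ) < Real.Gamma s := Real.Gamma_pos_of_pos hs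
  have h4 : (0:ℝ) < (1+δ) ^ (s + (k:ℝ)) := by positivity
  have h5 : (0:ℝ) < (k.factorial : ℝ) := by positivity
  field_simp

lemma coefC_summable {δ s : ℝ} (hδ : 0 < δ) (hs : 0 < s) : Summable (coefC δ s) := by
  have h1δ : (0:ℝ) < 1 + δ := by linarith
  apply summable_of_ratio_test_tendsto_lt_one
    (l := (1+δ)⁻¹) (by rw [inv_lt_one_iff₀]; right; linarith)
    (Filter.Eventually.of_forall fun k => (coefC_pos hδ hs k).ne')
  have heq : ∀ k : ℕ, ‖coefC δ s (k+1)‖ / ‖coefC δ s k‖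
      = (1 + (s-1)/((k:ℝ)+1)) * (1+δ)⁻¹ := by
    intro k
    rw [Real.norm_of_nonneg (coefC_pos hδ hs (k+1)).le,
      Real.norm_of_nonneg (coefC_pos hδ hs k).le, coefC_succ hδ hs k,
      mul_div_assoc, div_self (coefC_pos hδ hs k).ne', mul_one]
    have hk1 : ((k:ℝ)+1) ≠ 0 := by positivity
    field_simp
    ring
  simp_rw [heq]
  have h1 : Filter.Tendsto (fun k : ℕ => (s-1)/((k:ℝ)+1)) Filter.atTop (nhds 0) := by
    apply Filter.Tendsto.div_atTop tendsto_const_nhds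
    exact Filter.tendsto_atTop_add_const_right _ 1 tendsto_natCast_atTop_atTop
  have h2 : Filter.Tendsto (fun k : ℕ => (1 + (s-1)/((k:ℝ)+1)) * (1+δ)⁻¹)
      Filter.atTop (nhds ((1 + 0) * (1+δ)⁻¹)) :=
    ((tendsto_const_nhds.add h1)).mul tendsto_const_nhds
  simpa using h2

lemma hasSum_coefC {δ s : ℝ} (hδ : 0 < δ) (hs : 0 < s) {u : ℝ} (hu : |u| ≤ 1) :
    HasSum (fun k => coefC δ s k * u^k) ((1 - u + δ) ^ (-s)) := by
  have h1δ : (0:ℝ) < 1 + δ := by linarith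
  have hu1 : u ≤ 1 := (abs_le.mp hu).2
  set r : ℝ := 1 - u + δ with hrdef
  have hr : 0 < r := by simp only [hrdef]; linarith
  have hGs : (0:ℝ) < Real.Gamma s := Real.Gamma_pos_of_pos hs
  -- the summand functions on (0, ∞)
  set g : ℕ → ℝ → ℝ := fun k t => (u^k / (k.factorial : ℝ)) *
    (t ^ (s + (k:ℝ) - 1) * Real.exp (-((1+δ)*t))) with hgdef
  have hint : ∀ k : ℕ, IntegrableOn (fun t => t ^ (s + (k:ℝ) - 1) * Real.exp (-((1+δ)*t)))
      (Set.Ioi (0:ℝ)) := by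
    intro k
    have h := integrableOn_rpow_mul_exp_neg_mul_rpow
      (s := s + (k:ℝ) - 1) (p := 1) (b := 1+δ)
      (by have : (0:ℝ) ≤ k := Nat.cast_nonneg k; linarith) one_pos h1δ
    simpa only [Real.rpow_one, neg_mul] using h
  have hgint : ∀ k : ℕ, IntegrableOn (g k) (Set.Ioi (0:ℝ)) := fun k =>
    ((hint k).const_mul _)
  -- value of each integral
  have hval : ∀ k : ℕ, ∫ t in Set.Ioi (0:ℝ), t ^ (s + (k:ℝ) - 1) * Real.exp (-((1+δ)*t))
      = (1/(1+δ)) ^ (s + (k:ℝ)) * Real.Gamma (s + (k:ℝ)) :=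
    fun k => Real.integral_rpow_mul_exp_neg_mul_Ioi (a := s + (k:ℝ)) (by positivity) h1δ
  have hgval : ∀ k : ℕ, ∫ t in Set.Ioi (0:ℝ), g k t
      = (u^k / (k.factorial : ℝ)) * ((1/(1+δ)) ^ (s + (k:ℝ)) * Real.Gamma (s + (k:ℝ))) := by
    intro k
    rw [hgdef]
    simp only []
    rw [MeasureTheory.integral_const_mul, hval k]
  -- norm integrals
  have hnormval : ∀ k : ℕ, (∫ t in Set.Ioi (0:ℝ), ‖g k t‖)
      = (|u|^k / (k.factorial : ℝ)) * ((1/(1+δ)) ^ (s + (k:ℝ)) * Real.Gamma (s + (k:ℝ))) := by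
    intro k
    have : ∀ t ∈ Set.Ioi (0:ℝ), ‖g k t‖
        = (|u|^k / (k.factorial : ℝ)) * (t ^ (s + (k:ℝ) - 1) * Real.exp (-((1+δ)*t))) := by
      intro t ht
      have ht' : (0:ℝ) ≤ t := (le_of_lt ht)
      rw [hgdef]
      simp only [norm_mul, Real.norm_eq_abs, abs_div, abs_pow, abs_abs]
      rw [abs_of_nonneg (Real.rpow_nonneg ht' _), abs_of_nonneg (Real.exp_pos _).le,
        Nat.abs_cast]
    rw [MeasureTheory.setIntegral_congr_fun measurableSet_Ioi this,
      MeasureTheory.integral_const_mul, hval k]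
  have hnorm_summable : Summable (fun k => ∫ t in Set.Ioi (0:ℝ), ‖g k t‖) := by
    refine Summable.of_nonneg_of_le
      (fun k => integral_nonneg (fun t => norm_nonneg _)) (fun k => ?_)
      ((coefC_summable hδ hs).mul_left (Real.Gamma s))
    · rw [hnormval k]
      have h1 : |u|^k ≤ 1 := pow_le_one₀ (abs_nonneg u) hu
      have h2 : (0:ℝ) < (1/(1+δ)) ^ (s + (k:ℝ)) := by positivity
      have h3 : (0:ℝ) < Real.Gamma (s + (k:ℝ)) := Real.Gamma_pos_of_pos (by positivity)
      have heq : Real.Gamma s * coefC δ s k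
          = (1 / (k.factorial : ℝ)) * ((1/(1+δ)) ^ (s + (k:ℝ)) * Real.Gamma (s + (k:ℝ))) := by
        rw [coefC]
        rw [Real.div_rpow (by norm_num) h1δ.le, Real.one_rpow]
        have h5 : (0:ℝ) < (k.factorial : ℝ) := by positivity
        have h6 : (0:ℝ) < (1+δ) ^ (s + (k:ℝ)) := by positivity
        field_simp
      rw [heq]
      have h5 : (0:ℝ) < (k.factorial : ℝ) := by positivity
      apply mul_le_mul_of_nonneg_right _ (by positivity)
      rw [div_le_div_iff_of_pos_right h5]
      nlinarith
  -- swap sum and integral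
  have hswap := MeasureTheory.hasSum_integral_of_summable_integral_norm
    (μ := volume.restrict (Set.Ioi (0:ℝ))) (F := g) hgint hnorm_summable
  -- identify the integral of the tsum
  have htsum : ∀ t ∈ Set.Ioi (0:ℝ), (∑' k, g k t) = t ^ (s - 1) * Real.exp (-(r*t)) := by
    intro t ht
    have ht' : (0:ℝ) < t := ht
    have hterm : ∀ k : ℕ, g k t
        = (t ^ (s-1) * Real.exp (-((1+δ)*t))) * ((u*t)^k / (k.factorial : ℝ)) := by
      intro k
      rw [hgdef]
      simp only []
      have : t ^ (s + (k:ℝ) - 1) = t ^ (s - 1) * t ^ k := by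
        rw [show s + (k:ℝ) - 1 = (s-1) + (k:ℝ) by ring, Real.rpow_add ht',
          Real.rpow_natCast]
      rw [this, mul_pow]
      ring
    have hexp : HasSum (fun k : ℕ => (u*t)^k / (k.factorial : ℝ)) (Real.exp (u*t)) := by
      have h := NormedSpace.exp_series_hasSum_exp' (𝕂 := ℝ) (u*t)
      rw [← Real.exp_eq_exp_ℝ] at h
      simpa [smul_eq_mul, div_eq_inv_mul] using h
    have := (hexp.mul_left (t ^ (s-1) * Real.exp (-((1+δ)*t)))).tsum_eq
    calc (∑' k, g k t) = ∑' k, (t ^ (s-1) * Real.exp (-((1+δ)*t))) * ((u*t)^k / (k.factorial : ℝ)) := by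
          exact tsum_congr hterm
      _ = (t ^ (s-1) * Real.exp (-((1+δ)*t))) * Real.exp (u*t) := this
      _ = t ^ (s-1) * Real.exp (-(r*t)) := by
          rw [mul_assoc, ← Real.exp_add]
          congr 1
          simp only [hrdef]
          ring
  have hint_tsum : (∫ t in Set.Ioi (0:ℝ), ∑' k, g k t) = (1/r) ^ s * Real.Gamma s := by
    rw [MeasureTheory.setIntegral_congr_fun measurableSet_Ioi htsum]
    have := Real.integral_rpow_mul_exp_neg_mul_Ioi hs hr
    simpa using this
  rw [hint_tsum] at hswap
  -- divide by Gamma s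
  have hswap2 := hswap.div_const (Real.Gamma s)
  have hfinal1 : ((1/r) ^ s * Real.Gamma s) / Real.Gamma s = r ^ (-s) := by
    rw [mul_div_assoc, div_self hGs.ne', mul_one, one_div, ← Real.rpow_neg_one r,
      ← Real.rpow_mul hr.le]
    norm_num
  have hfinal2 : ∀ k : ℕ, (∫ t in Set.Ioi (0:ℝ), g k t) / Real.Gamma s
      = coefC δ s k * u^k := by
    intro k
    rw [hgval k, coefC]
    rw [Real.div_rpow (by norm_num) h1δ.le, Real.one_rpow]
    have h5 : (0:ℝ) < (k.factorial : ℝ) := by positivity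
    have h6 : (0:ℝ) < (1+δ) ^ (s + (k:ℝ)) := by positivity
    field_simp
  rw [hfinal1] at hswap2
  have : (fun k => (∫ t in Set.Ioi (0:ℝ), g k t) / Real.Gamma s)
      = fun k => coefC δ s k * u^k := funext hfinal2
  rwa [this] at hswap2

lemma legM_bound {C : ℝ} {n : ℕ}
    (hCn : ∀ z ∈ Set.Icc (-1:ℝ) 1, |legendreP n z| ≤ C) (k : ℕ) :
    |legM k n| ≤ 2 * C := by
  have h : ∀ y ∈ Set.uIoc (-1:ℝ) 1, ‖y^k * legendreP n y‖ ≤ C := by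
    intro y hy
    rw [Set.uIoc_of_le (by norm_num : (-1:ℝ) ≤ 1)] at hy
    have hy' : y ∈ Set.Icc (-1:ℝ) 1 := ⟨hy.1.le, hy.2⟩
    have hy1 : |y| ≤ 1 := abs_le.mpr ⟨hy'.1, hy'.2⟩
    have h1 : |y^k| ≤ 1 := by rw [abs_pow]; exact pow_le_one₀ (abs_nonneg _) hy1
    have h2 := hCn y hy'
    have hC0 : 0 ≤ C := le_trans (abs_nonneg _) (hCn 0 (by norm_num))
    calc ‖y^k * legendreP n y‖ = |y^k| * |legendreP n y| := abs_mul _ _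
      _ ≤ 1 * C := mul_le_mul h1 h2 (abs_nonneg _) zero_le_one
      _ = C := one_mul C
  have h0 := intervalIntegral.norm_integral_le_of_norm_le_const h
  have h2 : C * |1 - -(1:ℝ)| = 2 * C := by
    rw [show |1 - -(1:ℝ)| = 2 by norm_num]; ring
  simpa [legM] using h0.trans_eq h2



theorem jacobi_coefficient_nonneg (τ₁ τ₂ : ℕ) (hτ : τ₂ ≤ τ₁) (hτ0 : ¬(τ₁ = 0 ∧ τ₂ = 0))
    (δ s : ℝ) (hδ : 0 < δ) (hs : 0 < s) :
    0 ≤ ∫ x in (-1:ℝ)..1, ∫ y in (-1:ℝ)..1, (1 - x*y + δ) ^ (-s) * Pjac τ₁ τ₂ x y := by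
  set a := τ₁ + τ₂ with ha
  set b := τ₁ - τ₂ with hb
  -- uniform bound on the two Legendre polynomials
  obtain ⟨C1, hC1⟩ := (isCompact_Icc (a := (-1:ℝ)) (b := 1)).exists_bound_of_continuousOn
    (legendreP_cont a).continuousOn
  obtain ⟨C2, hC2⟩ := (isCompact_Icc (a := (-1:ℝ)) (b := 1)).exists_bound_of_continuousOn
    (legendreP_cont b).continuousOn
  set C : ℝ := max C1 C2 with hCdef
  have hCa : ∀ z ∈ Set.Icc (-1:ℝ) 1, |legendreP a z| ≤ C := fun z hz =>
    le_trans (hC1 z hz) (le_max_left _ _)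
  have hCb : ∀ z ∈ Set.Icc (-1:ℝ) 1, |legendreP b z| ≤ C := fun z hz =>
    le_trans (hC2 z hz) (le_max_right _ _)
  have hC0 : 0 ≤ C := le_trans (abs_nonneg _) (hCa 0 (by norm_num))
  have hMa := legM_bound hCa
  have hMb := legM_bound hCb
  set c : ℕ → ℝ := coefC δ s with hcdef
  have hcpos : ∀ k, 0 < c k := coefC_pos hδ hs
  have hcsum : Summable c := coefC_summable hδ hs
  -- the outer summand
  set G : ℕ → ℝ → ℝ := fun k x => c k * x^k *
    ((legendreP a x * legM k b + legendreP b x * legM k a)/2) with hGdef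
  -- Step 1: the inner integral equals the tsum of G
  have hInner : ∀ x ∈ Set.Icc (-1:ℝ) 1,
      (∫ y in (-1:ℝ)..1, (1 - x*y + δ) ^ (-s) * Pjac τ₁ τ₂ x y) = ∑' k, G k x := by
    intro x hx
    have hx1 : |x| ≤ 1 := abs_le.mpr ⟨hx.1, hx.2⟩
    set F : ℕ → ℝ → ℝ := fun k y => c k * (x*y)^k * Pjac τ₁ τ₂ x y with hFdef
    have hPc : Continuous (fun y => Pjac τ₁ τ₂ x y) := by
      unfold Pjac
      exact ((continuous_const.mul (legendreP_cont b)).add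
        ((legendreP_cont a).mul continuous_const)).div_const 2
    have hFcont : ∀ k, Continuous (F k) := fun k =>
      (continuous_const.mul ((continuous_const.mul continuous_id).pow k)).mul hPc
    have hFint : ∀ k, IntegrableOn (F k) (Set.Ioc (-1:ℝ) 1) :=
      fun k => (hFcont k).integrableOn_Ioc
    have hFbound : ∀ k, ∀ y ∈ Set.Ioc (-1:ℝ) 1, ‖F k y‖ ≤ c k * (C*C) := by
      intro k y hy
      have hy' : y ∈ Set.Icc (-1:ℝ) 1 := ⟨hy.1.le, hy.2⟩
      have hy1 : |y| ≤ 1 := abs_le.mpr ⟨hy'.1, hy'.2⟩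
      have hxy : |x*y| ≤ 1 := by
        rw [abs_mul]; exact mul_le_one₀ hx1 (abs_nonneg _) hy1
      have hxyk : |(x*y)^k| ≤ 1 := by rw [abs_pow]; exact pow_le_one₀ (abs_nonneg _) hxy
      have hP : |Pjac τ₁ τ₂ x y| ≤ C*C := by
        unfold Pjac
        have h1 := hCa x hx
        have h2 := hCb y hy'
        have h3 := hCa y hy'
        have h4 := hCb x hx
        have e1 : |legendreP a x * legendreP b y| ≤ C*C := by
          rw [abs_mul]; exact mul_le_mul h1 h2 (abs_nonneg _) hC0
        have e2 : |legendreP a y * legendreP b x| ≤ C*C := by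
          rw [abs_mul]; exact mul_le_mul h3 h4 (abs_nonneg _) hC0
        have habs : |(legendreP a x * legendreP b y + legendreP a y * legendreP b x)/2|
            = |legendreP a x * legendreP b y + legendreP a y * legendreP b x|/2 := by
          rw [abs_div, abs_two]
        have htri := abs_add_le (legendreP a x * legendreP b y) (legendreP a y * legendreP b x)
        rw [habs]
        linarith
      calc ‖F k y‖ = c k * (|(x*y)^k| * |Pjac τ₁ τ₂ x y|) := by
            simp only [hFdef]
            rw [Real.norm_eq_abs, abs_mul, abs_mul, abs_of_nonneg (hcpos k).le]
            ring
        _ ≤ c k * (1 * (C*C)) := by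
            apply mul_le_mul_of_nonneg_left _ (hcpos k).le
            exact mul_le_mul hxyk hP (abs_nonneg _) zero_le_one
        _ = c k * (C*C) := by ring
    have hFnormint : ∀ k, (∫ y in Set.Ioc (-1:ℝ) 1, ‖F k y‖) ≤ 2 * (c k * (C*C)) := by
      intro k
      have h1 : (∫ y in Set.Ioc (-1:ℝ) 1, ‖F k y‖)
          ≤ ∫ _ in Set.Ioc (-1:ℝ) 1, c k * (C*C) :=
        setIntegral_mono_on (hFint k).norm (integrableOn_const (by simp))
          measurableSet_Ioc (hFbound k)
      have h2 : (∫ _ in Set.Ioc (-1:ℝ) 1, c k * (C*C)) = 2 * (c k * (C*C)) := by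
        rw [setIntegral_const]
        simp [Real.volume_Ioc]
        norm_num
      linarith
    have hFsumm : Summable (fun k => ∫ y in Set.Ioc (-1:ℝ) 1, ‖F k y‖) :=
      Summable.of_nonneg_of_le (fun k => integral_nonneg fun y => norm_nonneg _)
        hFnormint ((hcsum.mul_right (C*C)).mul_left 2)
    have hHS : ∀ y ∈ Set.Ioc (-1:ℝ) 1,
        HasSum (fun k => F k y) ((1 - x*y + δ) ^ (-s) * Pjac τ₁ τ₂ x y) := by
      intro y hy
      have hy1 : |y| ≤ 1 := abs_le.mpr ⟨hy.1.le, hy.2⟩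
      have hxy : |x*y| ≤ 1 := by
        rw [abs_mul]; exact mul_le_one₀ hx1 (abs_nonneg _) hy1
      exact (hasSum_coefC hδ hs hxy).mul_right _
    have hFval : ∀ k, (∫ y in Set.Ioc (-1:ℝ) 1, F k y) = G k x := by
      intro k
      rw [← intervalIntegral.integral_of_le (by norm_num : (-1:ℝ) ≤ 1)]
      have heq : Set.EqOn (F k) (fun y => (c k * x^k * legendreP a x/2) * (y^k * legendreP b y)
          + (c k * x^k * legendreP b x/2) * (y^k * legendreP a y)) (Set.uIcc (-1:ℝ) 1) := by
        intro y _
        show c k * (x*y)^k * Pjac τ₁ τ₂ x y = _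
        unfold Pjac
        rw [mul_pow]
        ring
      rw [intervalIntegral.integral_congr heq, intervalIntegral.integral_add,
        intervalIntegral.integral_const_mul, intervalIntegral.integral_const_mul]
      show c k * x^k * legendreP a x/2 * legM k b + c k * x^k * legendreP b x/2 * legM k a = G k x
      rw [hGdef]
      ring
      · exact (continuous_const.mul ((continuous_pow k).mul (legendreP_cont b))).intervalIntegrable _ _
      · exact (continuous_const.mul ((continuous_pow k).mul (legendreP_cont a))).intervalIntegrable _ _
    calc (∫ y in (-1:ℝ)..1, (1 - x*y + δ) ^ (-s) * Pjac τ₁ τ₂ x y)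
        = ∫ y in Set.Ioc (-1:ℝ) 1, (1 - x*y + δ) ^ (-s) * Pjac τ₁ τ₂ x y :=
          intervalIntegral.integral_of_le (by norm_num)
      _ = ∫ y in Set.Ioc (-1:ℝ) 1, ∑' k, F k y :=
          setIntegral_congr_fun measurableSet_Ioc (fun y hy => ((hHS y hy).tsum_eq).symm)
      _ = ∑' k, ∫ y in Set.Ioc (-1:ℝ) 1, F k y :=
          (integral_tsum_of_summable_integral_norm hFint hFsumm).symm
      _ = ∑' k, G k x := tsum_congr hFval
  -- Step 2: outer integral
  have hGcont : ∀ k, Continuous (G k) := fun k =>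
    (continuous_const.mul (continuous_pow k)).mul
      ((((legendreP_cont a).mul continuous_const).add
        ((legendreP_cont b).mul continuous_const)).div_const 2)
  have hGint : ∀ k, IntegrableOn (G k) (Set.Ioc (-1:ℝ) 1) :=
    fun k => (hGcont k).integrableOn_Ioc
  have hGbound : ∀ k, ∀ x ∈ Set.Ioc (-1:ℝ) 1, ‖G k x‖ ≤ c k * (2*(C*C)) := by
    intro k x hx
    have hx' : x ∈ Set.Icc (-1:ℝ) 1 := ⟨hx.1.le, hx.2⟩
    have hx1 : |x| ≤ 1 := abs_le.mpr ⟨hx'.1, hx'.2⟩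
    have hxk : |x^k| ≤ 1 := by rw [abs_pow]; exact pow_le_one₀ (abs_nonneg _) hx1
    have h1 := hCa x hx'
    have h2 := hCb x hx'
    have hMak := hMa k
    have hMbk := hMb k
    have hmid : |(legendreP a x * legM k b + legendreP b x * legM k a)/2| ≤ 2*(C*C) := by
      have e1 : |legendreP a x * legM k b| ≤ C * (2*C) := by
        rw [abs_mul]; exact mul_le_mul h1 hMbk (abs_nonneg _) hC0
      have e2 : |legendreP b x * legM k a| ≤ C * (2*C) := by
        rw [abs_mul]; exact mul_le_mul h2 hMak (abs_nonneg _) hC0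
      have habs : |(legendreP a x * legM k b + legendreP b x * legM k a)/2|
          = |legendreP a x * legM k b + legendreP b x * legM k a|/2 := by
        rw [abs_div, abs_two]
      have htri := abs_add_le (legendreP a x * legM k b) (legendreP b x * legM k a)
      rw [habs]
      linarith
    calc ‖G k x‖ = c k * (|x^k| * |(legendreP a x * legM k b + legendreP b x * legM k a)/2|) := by
          simp only [hGdef]
          rw [Real.norm_eq_abs, abs_mul, abs_mul, abs_of_nonneg (hcpos k).le]
          ring
      _ ≤ c k * (1 * (2*(C*C))) := by
          apply mul_le_mul_of_nonneg_left _ (hcpos k).le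
          exact mul_le_mul hxk hmid (abs_nonneg _) zero_le_one
      _ = c k * (2*(C*C)) := by ring
  have hGnormint : ∀ k, (∫ x in Set.Ioc (-1:ℝ) 1, ‖G k x‖) ≤ 2 * (c k * (2*(C*C))) := by
    intro k
    have h1 : (∫ x in Set.Ioc (-1:ℝ) 1, ‖G k x‖)
        ≤ ∫ _ in Set.Ioc (-1:ℝ) 1, c k * (2*(C*C)) :=
      setIntegral_mono_on (hGint k).norm (integrableOn_const (by simp))
        measurableSet_Ioc (hGbound k)
    have h2 : (∫ _ in Set.Ioc (-1:ℝ) 1, c k * (2*(C*C))) = 2 * (c k * (2*(C*C))) := by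
      rw [setIntegral_const]
      simp [Real.volume_Ioc]
      norm_num
    linarith
  have hGsumm : Summable (fun k => ∫ x in Set.Ioc (-1:ℝ) 1, ‖G k x‖) :=
    Summable.of_nonneg_of_le (fun k => integral_nonneg fun x => norm_nonneg _)
      hGnormint ((hcsum.mul_right (2*(C*C))).mul_left 2)
  have hGval : ∀ k, (∫ x in Set.Ioc (-1:ℝ) 1, G k x)
      = c k * ((legM k a * legM k b + legM k b * legM k a)/2) := by
    intro k
    rw [← intervalIntegral.integral_of_le (by norm_num : (-1:ℝ) ≤ 1)]
    have heq : Set.EqOn (G k) (fun x => (c k * legM k b/2) * (x^k * legendreP a x)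
        + (c k * legM k a/2) * (x^k * legendreP b x)) (Set.uIcc (-1:ℝ) 1) := by
      intro x _
      show c k * x^k * ((legendreP a x * legM k b + legendreP b x * legM k a)/2) = _
      ring
    rw [intervalIntegral.integral_congr heq, intervalIntegral.integral_add,
      intervalIntegral.integral_const_mul, intervalIntegral.integral_const_mul]
    show c k * legM k b/2 * legM k a + c k * legM k a/2 * legM k b = _
    ring
    · exact (continuous_const.mul ((continuous_pow k).mul (legendreP_cont a))).intervalIntegrable _ _
    · exact (continuous_const.mul ((continuous_pow k).mul (legendreP_cont b))).intervalIntegrable _ _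
  have hmain : (∫ x in (-1:ℝ)..1, ∫ y in (-1:ℝ)..1, (1 - x*y + δ) ^ (-s) * Pjac τ₁ τ₂ x y)
      = ∑' k, c k * ((legM k a * legM k b + legM k b * legM k a)/2) := by
    have hEq : Set.EqOn (fun x => ∫ y in (-1:ℝ)..1, (1 - x*y + δ) ^ (-s) * Pjac τ₁ τ₂ x y)
        (fun x => ∑' k, G k x) (Set.uIcc (-1:ℝ) 1) := by
      intro x hx
      rw [Set.uIcc_of_le (by norm_num : (-1:ℝ) ≤ 1)] at hx
      exact hInner x hx
    calc (∫ x in (-1:ℝ)..1, ∫ y in (-1:ℝ)..1, (1 - x*y + δ) ^ (-s) * Pjac τ₁ τ₂ x y)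
        = ∫ x in (-1:ℝ)..1, ∑' k, G k x := intervalIntegral.integral_congr hEq
      _ = ∫ x in Set.Ioc (-1:ℝ) 1, ∑' k, G k x := intervalIntegral.integral_of_le (by norm_num)
      _ = ∑' k, ∫ x in Set.Ioc (-1:ℝ) 1, G k x :=
          (integral_tsum_of_summable_integral_norm hGint hGsumm).symm
      _ = ∑' k, c k * ((legM k a * legM k b + legM k b * legM k a)/2) := tsum_congr hGval
  rw [hmain]
  apply tsum_nonneg
  intro k
  have h1 := legM_nonneg k a
  have h2 := legM_nonneg k b
  have h3 := (hcpos k).le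
  positivity
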